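/- With S = A[[x₁,…,xₙ]] and T = S[[t]] as above, for any two ideals I, J ⊆ S one has hom(I ∩ J) = hom(I) ∩ hom(J). -/

import Mathlib

noncomputable section

/-- `A` is a complete regular local ring. -/
def IsCompleteRegularLocal (A : Type*) [CommRing A] [IsLocalRing A] : Prop :=
  IsNoetherianRing A ∧ IsAdicComplete (IsLocalRing.maximalIdeal A) A ∧
    ∃ s : Finset A, Ideal.span (s : Set A) = IsLocalRing.maximalIdeal A ∧
      ((s.card : ℕ∞) : WithBot ℕ∞) = ringKrullDim A

/-- `A` either contains a field, or is unramified (of mixed characteristic), i.e. the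
residue characteristic `p` satisfies `p ∈ m_A \ m_A²`. -/
def ContainsFieldOrUnramified (A : Type*) [CommRing A] [IsLocalRing A] : Prop :=
  (∃ K : Subring A, IsField K) ∨
    (∃ p : ℕ, p.Prime ∧ (p : A) ∈ IsLocalRing.maximalIdeal A ∧
      (p : A) ∉ IsLocalRing.maximalIdeal A ^ 2)

variable {A : Type*} [CommRing A] {n : ℕ}

/-- The ideal `(x₁, …, xₙ)` of `S = A[[x₁,…,xₙ]]`. -/
def xIdeal (A : Type*) [CommRing A] (n : ℕ) : Ideal (MvPowerSeries (Fin n) A) :=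
  Ideal.span (Set.range MvPowerSeries.X)

/-- The order `o(f) = sup { i : f ∈ (x₁,…,xₙ)^i }` of a power series `f ∈ S`. -/
def ordF (f : MvPowerSeries (Fin n) A) : ℕ :=
  sSup {i : ℕ | f ∈ (xIdeal A n) ^ i}

/-- The degree-`i` homogeneous component of `f` (in the `x`-variables; elements of `A`
have degree `0`). -/
def homComp (i : ℕ) (f : MvPowerSeries (Fin n) A) : MvPowerSeries (Fin n) A :=
  fun e => if (e.sum fun _ v => v) = i then MvPowerSeries.coeff e f else 0

/-- The homogenization `hom(f) = t^{-o(f)} ψ(f) ∈ T = S[[t]]`, where `ψ : S → T` is the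
`A`-algebra map `xᵢ ↦ xᵢ t`; the coefficient of `t^j` is the homogeneous component of
`f` of degree `o(f) + j`. -/
def homF (f : MvPowerSeries (Fin n) A) : PowerSeries (MvPowerSeries (Fin n) A) :=
  PowerSeries.mk fun j => homComp (ordF f + j) f

/-- `hom(I) = ( hom(f) : 0 ≠ f ∈ I ) ⊆ T = S[[t]]`. -/
def homIdeal (I : Ideal (MvPowerSeries (Fin n) A)) :
    Ideal (PowerSeries (MvPowerSeries (Fin n) A)) :=
  Ideal.span {F | ∃ f ∈ I, f ≠ 0 ∧ homF f = F}

namespace Stmt9Aux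

open PowerSeries in
private theorem dummy_open_marker : True := trivial

open PowerSeries


variable {R : Type*} [CommRing R]

/-- The ideal of `i`-th coefficients of elements of `Q` divisible by `X^i`. -/
def lead (Q : Ideal (PowerSeries R)) (i : ℕ) : Ideal R where
  carrier := {r | ∃ f ∈ Q, X ^ i ∣ f ∧ coeff i f = r}
  add_mem' := by
    rintro a b ⟨f, hf, hfd, rfl⟩ ⟨g, hg, hgd, rfl⟩
    exact ⟨f + g, Q.add_mem hf hg, dvd_add hfd hgd, (map_add _ _ _)⟩
  zero_mem' := ⟨0, Q.zero_mem, dvd_zero _, map_zero _⟩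
  smul_mem' := by
    rintro c a ⟨f, hf, hfd, rfl⟩
    exact ⟨C c * f, Q.mul_mem_left _ hf, (hfd.mul_left _), by
      rw [coeff_C_mul]; rfl⟩

lemma mem_lead {Q : Ideal (PowerSeries R)} {i : ℕ} {a : R} :
    a ∈ lead Q i ↔ ∃ f ∈ Q, X ^ i ∣ f ∧ coeff i f = a := Iff.rfl

lemma lead_mono (Q : Ideal (PowerSeries R)) : Monotone (lead Q) := by
  apply monotone_nat_of_le_succ
  intro i a ⟨f, hf, hfd, hc⟩
  refine ⟨X * f, Q.mul_mem_left _ hf, ?_, by rw [coeff_succ_X_mul]; exact hc⟩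
  · rw [pow_succ, mul_comm]; exact mul_dvd_mul_left X hfd

lemma coeff_X_pow_mul' (p : PowerSeries R) (k j : ℕ) :
    coeff j (X ^ k * p) = if k ≤ j then coeff (j - k) p else 0 := by
  split_ifs with h
  · conv_lhs => rw [show j = (j - k) + k from (Nat.sub_add_cancel h).symm]
    exact coeff_X_pow_mul p k (j - k)
  · exact (X_pow_dvd_iff.mp (dvd_mul_right _ _)) j (lt_of_not_ge h)

theorem isNoetherianRing_powerSeries [IsNoetherianRing R] :
    IsNoetherianRing (PowerSeries R) := by
  rw [isNoetherianRing_iff_ideal_fg]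
  intro Q
  classical
  -- stabilization index
  obtain ⟨N, hN⟩ := monotone_stabilizes_iff_noetherian.mpr
    (by infer_instance : IsNoetherian R R) ⟨lead Q, lead_mono Q⟩
  have hstab : ∀ m, lead Q m = lead Q (min m N) := by
    intro m
    rcases le_total m N with h | h
    · rw [min_eq_left h]
    · rw [min_eq_right h]
      exact (hN m h).symm
  -- generators of the lead ideals
  have hfg : ∀ i, (lead Q i).FG := fun i => IsNoetherian.noetherian _
  choose s hs using hfg
  -- witnesses
  have hwit : ∀ i a, a ∈ lead Q i → ∃ f, f ∈ Q ∧ X ^ i ∣ f ∧ coeff i f = a := by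
    intro i a ha; obtain ⟨f, hf, h1, h2⟩ := mem_lead.mp ha; exact ⟨f, hf, h1, h2⟩
  set wit : ℕ → R → PowerSeries R := fun i a =>
    if h : a ∈ lead Q i then (hwit i a h).choose else 0 with hwitdef
  have wit_mem : ∀ i a, a ∈ lead Q i → wit i a ∈ Q := by
    intro i a h; rw [hwitdef]; simp only [dif_pos h]; exact (hwit i a h).choose_spec.1
  have wit_dvd : ∀ i a, a ∈ lead Q i → X ^ i ∣ wit i a := by
    intro i a h; rw [hwitdef]; simp only [dif_pos h]; exact (hwit i a h).choose_spec.2.1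
  have wit_coeff : ∀ i a, a ∈ lead Q i → coeff i (wit i a) = a := by
    intro i a h; rw [hwitdef]; simp only [dif_pos h]; exact (hwit i a h).choose_spec.2.2
  have hsub : ∀ i, (s i : Set R) ⊆ lead Q i := by
    intro i; rw [← hs i]; exact Ideal.subset_span
  -- the index set and generator map
  set D : Finset (ℕ × R) :=
    (Finset.range (N + 1)).biUnion (fun i => (s i).image fun a => (i, a)) with hD
  set W : ℕ × R → PowerSeries R := fun p => wit p.1 p.2 with hW
  have hDmem : ∀ p ∈ D, p.1 ≤ N ∧ p.2 ∈ lead Q p.1 := by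
    intro p hp
    simp only [hD, Finset.mem_biUnion, Finset.mem_range, Finset.mem_image] at hp
    obtain ⟨i, hi, a, ha, rfl⟩ := hp
    exact ⟨Nat.lt_succ_iff.mp hi, hsub i ha⟩
  refine ⟨D.image W, le_antisymm ?_ ?_⟩
  · -- span ⊆ Q
    rw [Ideal.span_le]
    intro w hw
    simp only [Finset.coe_image, Set.mem_image, Finset.mem_coe] at hw
    obtain ⟨p, hp, rfl⟩ := hw
    exact wit_mem p.1 p.2 (hDmem p hp).2
  · -- Q ⊆ span
    intro g hg
    -- the one-step approximation
    have step : ∀ m (g' : PowerSeries R), g' ∈ Q → X ^ m ∣ g' →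
        ∃ ρ : R → R,
          (g' - ∑ a ∈ s (min m N),
            C (ρ a) * X ^ (m - min m N) * wit (min m N) a) ∈ Q ∧
          X ^ (m + 1) ∣ (g' - ∑ a ∈ s (min m N),
            C (ρ a) * X ^ (m - min m N) * wit (min m N) a) := by
      intro m g' hg' hdvd
      set m' := min m N with hm'
      have hm'le : m' ≤ m := min_le_left _ _
      have hmem : coeff m g' ∈ lead Q m' := by
        rw [← hstab m]; exact ⟨g', hg', hdvd, rfl⟩
      rw [← hs m'] at hmem
      obtain ⟨ρ, -, hρ⟩ := Submodule.mem_span_finset.mp hmem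
      refine ⟨ρ, ?_, ?_⟩
      · refine Q.sub_mem hg' (Ideal.sum_mem _ fun a ha => ?_)
        exact Q.mul_mem_left _ (wit_mem m' a (hsub m' ha))
      · rw [X_pow_dvd_iff]
        intro j hj
        rw [map_sub, map_sum]
        have hjm : j ≤ m := Nat.lt_succ_iff.mp hj
        rcases eq_or_lt_of_le hjm with rfl | hlt
        · -- j = m
          have hcoeff : ∀ a ∈ s m', coeff j (C (ρ a) * X ^ (j - m') * wit m' a)
              = ρ a • a := by
            intro a ha
            rw [mul_assoc, coeff_C_mul, coeff_X_pow_mul', if_pos (by omega),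
              show j - (j - m') = m' by omega, wit_coeff m' a (hsub m' ha), smul_eq_mul]
          rw [Finset.sum_congr rfl hcoeff, hρ, sub_self]
        · -- j < m
          have hcoeff : ∀ a ∈ s m', coeff j (C (ρ a) * X ^ (m - m') * wit m' a)
              = 0 := by
            intro a ha
            rw [mul_assoc, coeff_C_mul, coeff_X_pow_mul']
            split_ifs with h
            · have : j - (m - m') < m' := by omega
              rw [X_pow_dvd_iff.mp (wit_dvd m' a (hsub m' ha)) _ this, mul_zero]
            · rw [mul_zero]
          rw [Finset.sum_congr rfl hcoeff, X_pow_dvd_iff.mp hdvd j hlt,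
            Finset.sum_const_zero, sub_self]
    -- the recursive sequence
    let T : ℕ → Type _ := fun m => {g' : PowerSeries R // g' ∈ Q ∧ X ^ m ∣ g'}
    let seq : ∀ m, T m := fun m => Nat.rec
      (⟨g, hg, by simp⟩ : T 0)
      (fun m prev =>
        ⟨prev.1 - ∑ a ∈ s (min m N),
            C ((step m prev.1 prev.2.1 prev.2.2).choose a) * X ^ (m - min m N)
              * wit (min m N) a,
         (step m prev.1 prev.2.1 prev.2.2).choose_spec.1,
         (step m prev.1 prev.2.1 prev.2.2).choose_spec.2⟩) m
    set G : ℕ → PowerSeries R := fun m => (seq m).1 with hG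
    set rho : ℕ → R → R := fun m => (step m (seq m).1 (seq m).2.1 (seq m).2.2).choose with hrho
    have hGstep : ∀ m, G (m + 1) = G m - ∑ a ∈ s (min m N),
        C (rho m a) * X ^ (m - min m N) * wit (min m N) a := fun m => rfl
    -- the stage terms indexed by D
    set trm : ℕ → ℕ × R → PowerSeries R := fun m p =>
      if p.1 = min m N then C (rho m p.2) * X ^ (m - p.1) else 0 with htrmdef
    have htrm0 : ∀ m p d, d < m - N → coeff d (trm m p) = 0 := by
      intro m p d hd
      simp only [htrmdef]
      split_ifs with h
      · have hple : p.1 ≤ N := h ▸ min_le_right m N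
        rw [coeff_C_mul, coeff_X_pow, if_neg (by omega : ¬ d = m - p.1), mul_zero]
      · simp
    have hK1 : ∀ m, G m - G (m + 1) = ∑ p ∈ D, trm m p * W p := by
      intro m
      rw [hGstep m, sub_sub_cancel]
      have hdisj : (↑(Finset.range (N + 1)) : Set ℕ).PairwiseDisjoint
          (fun i => (s i).image fun a => (i, a)) := by
        intro i _ j _ hij
        refine Finset.disjoint_left.mpr ?_
        rintro p hp1 hp2
        simp only [Finset.mem_image] at hp1 hp2
        obtain ⟨a, _, rfl⟩ := hp1
        obtain ⟨b, _, hb⟩ := hp2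
        exact hij (congrArg Prod.fst hb).symm
      rw [hD, Finset.sum_biUnion hdisj]
      have hmin : min m N ∈ Finset.range (N + 1) := by
        simp [Nat.lt_succ_iff, min_le_right]
      rw [Finset.sum_eq_single_of_mem (min m N) hmin ?_]
      · rw [Finset.sum_image (fun a _ b _ h => (Prod.mk.injEq _ _ _ _).mp h |>.2)]
        refine Finset.sum_congr rfl fun a ha => ?_
        simp only [htrmdef, if_pos rfl]
        rfl
      · intro i _ hi
        apply Finset.sum_eq_zero
        intro p hp
        simp only [Finset.mem_image] at hp
        obtain ⟨a, _, rfl⟩ := hp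
        simp only [htrmdef, if_neg hi, zero_mul]
    -- the limit coefficients
    set u : ℕ × R → PowerSeries R := fun p =>
      PowerSeries.mk fun d => coeff d (∑ m ∈ Finset.range (d + N + 1), trm m p) with hu
    have hcu : ∀ p d M, d + N + 1 ≤ M →
        coeff d (u p) = coeff d (∑ m ∈ Finset.range M, trm m p) := by
      intro p d M hM
      rw [hu]
      simp only [coeff_mk, map_sum]
      refine Finset.sum_subset (Finset.range_subset_range.mpr hM) ?_
      intro m _ hm
      simp only [Finset.mem_range, not_lt] at hm
      exact htrm0 m p d (by omega)
    have hrepr : g = ∑ p ∈ D, u p * W p := by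
      apply PowerSeries.ext
      intro d
      set M := d + N + 1 with hM
      have hddvd : coeff d (G M) = 0 :=
        X_pow_dvd_iff.mp (seq M).2.2 d (by omega)
      have h1 : ∀ p, coeff d (u p * W p) =
          coeff d ((∑ m ∈ Finset.range M, trm m p) * W p) := by
        intro p
        rw [coeff_mul, coeff_mul]
        refine Finset.sum_congr rfl fun q hq => ?_
        have hq1 : q.1 ≤ d := Finset.HasAntidiagonal.antidiagonal.fst_le hq
        rw [hcu p q.1 M (by omega)]
      calc coeff d g
          = coeff d (G 0 - G M) := by
            rw [show G 0 = g from rfl]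
            rw [map_sub, hddvd, sub_zero]
        _ = coeff d (∑ m ∈ Finset.range M, (G m - G (m + 1))) := by
            rw [Finset.sum_range_sub']
        _ = coeff d (∑ m ∈ Finset.range M, ∑ p ∈ D, trm m p * W p) := by
            rw [Finset.sum_congr rfl fun m _ => hK1 m]
        _ = coeff d (∑ p ∈ D, ∑ m ∈ Finset.range M, trm m p * W p) := by
            rw [Finset.sum_comm]
        _ = ∑ p ∈ D, coeff d ((∑ m ∈ Finset.range M, trm m p) * W p) := by
            rw [map_sum]
            exact Finset.sum_congr rfl fun p _ => by rw [Finset.sum_mul]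
        _ = ∑ p ∈ D, coeff d (u p * W p) := by
            exact Finset.sum_congr rfl fun p _ => (h1 p).symm
        _ = coeff d (∑ p ∈ D, u p * W p) := (map_sum _ _ _).symm
    rw [hrepr]
    refine Ideal.sum_mem _ fun p hp => Ideal.mul_mem_left _ _ (Ideal.subset_span ?_)
    exact Finset.mem_coe.mpr (Finset.mem_image_of_mem W hp)


variable {A : Type*} [CommRing A] {n : ℕ}



lemma cons_add' (a b : ℕ) (s t : Fin n →₀ ℕ) :
    Finsupp.cons a s + Finsupp.cons b t = Finsupp.cons (a + b) (s + t) := by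
  ext i
  refine Fin.cases ?_ ?_ i <;> simp [Finsupp.cons_zero, Finsupp.cons_succ]

lemma tail_add' (s t : Fin (n + 1) →₀ ℕ) :
    (s + t).tail = s.tail + t.tail := by
  ext i; simp [Finsupp.tail_apply]

/-- `A[[x₀,…,xₙ]] ≃ A[[x₁,…,xₙ]][[x₀]]`. -/
def consEquiv : MvPowerSeries (Fin (n + 1)) A ≃+* PowerSeries (MvPowerSeries (Fin n) A) where
  toFun F := PowerSeries.mk fun m => (fun ν => F (Finsupp.cons m ν) : MvPowerSeries (Fin n) A)
  invFun G := fun μ => MvPowerSeries.coeff μ.tail (PowerSeries.coeff (μ 0) G)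
  left_inv F := by
    funext μ
    show MvPowerSeries.coeff μ.tail (PowerSeries.coeff (μ 0) (PowerSeries.mk _)) = F μ
    erw [PowerSeries.coeff_mk]
    show F (Finsupp.cons (μ 0) μ.tail) = F μ
    rw [Finsupp.cons_tail]
  right_inv G := by
    apply PowerSeries.ext
    intro m
    erw [PowerSeries.coeff_mk]
    funext ν
    show MvPowerSeries.coeff (Finsupp.cons m ν).tail
      (PowerSeries.coeff ((Finsupp.cons m ν) 0) G) = _
    rw [Finsupp.cons_zero, Finsupp.tail_cons]
    rfl
  map_add' F G := by
    apply PowerSeries.ext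
    intro m
    erw [map_add]
  map_mul' F G := by
    apply PowerSeries.ext
    intro m
    apply MvPowerSeries.ext
    intro ν
    erw [PowerSeries.coeff_mk]
    simp only [PowerSeries.coeff_mul, map_sum, PowerSeries.coeff_mk, MvPowerSeries.coeff_mul]
    have h0 : MvPowerSeries.coeff ν (fun ν' => (F * G) (Finsupp.cons m ν')) =
        MvPowerSeries.coeff (Finsupp.cons m ν) (F * G) := rfl
    rw [h0, MvPowerSeries.coeff_mul, ← Finset.sum_product']
    refine Finset.sum_bij'
      (fun r _ => ((r.1 0, r.2 0), (r.1.tail, r.2.tail)))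
      (fun r _ => (Finsupp.cons r.1.1 r.2.1, Finsupp.cons r.1.2 r.2.2))
      ?_ ?_ ?_ ?_ ?_
    · intro r hr
      rw [Finset.HasAntidiagonal.mem_antidiagonal] at hr
      rw [Finset.mem_product, Finset.HasAntidiagonal.mem_antidiagonal, Finset.HasAntidiagonal.mem_antidiagonal]
      constructor
      · have h1 := congrArg (fun f : Fin (n+1) →₀ ℕ => f 0) hr
        simpa [Finsupp.add_apply, Finsupp.cons_zero] using h1
      · rw [← tail_add', hr, Finsupp.tail_cons]
    · intro r hr
      rw [Finset.mem_product, Finset.HasAntidiagonal.mem_antidiagonal, Finset.HasAntidiagonal.mem_antidiagonal] at hr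
      rw [Finset.HasAntidiagonal.mem_antidiagonal, cons_add', hr.1, hr.2]
    · intro r _
      show (Finsupp.cons (r.1 0) r.1.tail, Finsupp.cons (r.2 0) r.2.tail) = r
      rw [Finsupp.cons_tail, Finsupp.cons_tail]
    · intro r _
      show (((Finsupp.cons r.1.1 r.2.1) 0, (Finsupp.cons r.1.2 r.2.2) 0),
        ((Finsupp.cons r.1.1 r.2.1).tail, (Finsupp.cons r.1.2 r.2.2).tail)) = r
      rw [Finsupp.cons_zero, Finsupp.cons_zero, Finsupp.tail_cons, Finsupp.tail_cons]
    · intro r _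
      erw [PowerSeries.coeff_mk, PowerSeries.coeff_mk]
      show MvPowerSeries.coeff r.1 F * MvPowerSeries.coeff r.2 G =
        MvPowerSeries.coeff (Finsupp.cons (r.1 0) r.1.tail) F *
          MvPowerSeries.coeff (Finsupp.cons (r.2 0) r.2.tail) G
      rw [Finsupp.cons_tail, Finsupp.cons_tail]

/-- `A[[∅]] ≃ A`. -/
def emptyEquiv : MvPowerSeries (Fin 0) A ≃+* A where
  toFun f := MvPowerSeries.coeff 0 f
  invFun a := MvPowerSeries.C a
  left_inv f := by
    apply MvPowerSeries.ext
    intro μ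
    have hμ : μ = 0 := by ext i; exact i.elim0
    subst hμ
    rw [MvPowerSeries.coeff_zero_C]
  right_inv a := MvPowerSeries.coeff_zero_C a
  map_add' f g := map_add _ _ _
  map_mul' f g := by
    show MvPowerSeries.coeff 0 (f * g) = MvPowerSeries.coeff 0 f * MvPowerSeries.coeff 0 g
    rw [MvPowerSeries.coeff_mul, Finset.HasAntidiagonal.antidiagonal_zero, Finset.sum_singleton]

theorem isNoetherianRing_mv (A : Type*) [CommRing A] [IsNoetherianRing A] (n : ℕ) :
    IsNoetherianRing (MvPowerSeries (Fin n) A) := by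
  induction n with
  | zero => exact isNoetherianRing_of_ringEquiv A (emptyEquiv (A := A)).symm
  | succ k ih =>
      have := ih
      have h2 : IsNoetherianRing (PowerSeries (MvPowerSeries (Fin k) A)) :=
        isNoetherianRing_powerSeries
      exact isNoetherianRing_of_ringEquiv _ (consEquiv (A := A) (n := k)).symm





def degree (μ : Fin n →₀ ℕ) : ℕ := μ.sum fun _ v => v

lemma degree_add (μ ν : Fin n →₀ ℕ) : degree (μ + ν) = degree μ + degree ν :=
  Finsupp.sum_add_index' (fun _ => rfl) (fun _ _ _ => rfl)

lemma degree_single (i : Fin n) (k : ℕ) : degree (Finsupp.single i k) = k :=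
  Finsupp.sum_single_index rfl

lemma degree_zero : degree (0 : Fin n →₀ ℕ) = 0 := Finsupp.sum_zero_index

def Lideal (A : Type*) [CommRing A] (n : ℕ) (k : ℕ) : Ideal (MvPowerSeries (Fin n) A) where
  carrier := {f | ∀ μ, degree μ < k → MvPowerSeries.coeff μ f = 0}
  add_mem' := by
    intro f g hf hg μ hμ
    rw [map_add, hf μ hμ, hg μ hμ, add_zero]
  zero_mem' := fun μ _ => map_zero _
  smul_mem' := by
    intro c f hf μ hμ
    rw [smul_eq_mul, MvPowerSeries.coeff_mul]
    refine Finset.sum_eq_zero fun q hq => ?_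
    rw [Finset.HasAntidiagonal.mem_antidiagonal] at hq
    have : degree q.2 < k := by
      have := degree_add q.1 q.2
      rw [hq] at this
      omega
    rw [hf q.2 this, mul_zero]

lemma mem_Lideal_iff {k : ℕ} {f : MvPowerSeries (Fin n) A} :
    f ∈ Lideal A n k ↔ ∀ μ, degree μ < k → MvPowerSeries.coeff μ f = 0 := Iff.rfl

lemma Lideal_mul_le {j l : ℕ} {f g : MvPowerSeries (Fin n) A}
    (hf : f ∈ Lideal A n j) (hg : g ∈ Lideal A n l) : f * g ∈ Lideal A n (j + l) := by
  intro μ hμ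
  rw [MvPowerSeries.coeff_mul]
  refine Finset.sum_eq_zero fun q hq => ?_
  rw [Finset.HasAntidiagonal.mem_antidiagonal] at hq
  have hdeg : degree q.1 + degree q.2 < j + l := by
    have := degree_add q.1 q.2
    rw [hq] at this
    omega
  rcases lt_or_ge (degree q.1) j with h | h
  · rw [hf q.1 h, zero_mul]
  · rw [hg q.2 (by omega), mul_zero]

lemma xIdeal_le_Lideal_one : xIdeal A n ≤ Lideal A n 1 := by
  rw [xIdeal, Ideal.span_le]
  rintro f ⟨i, rfl⟩
  intro μ hμ
  rw [MvPowerSeries.coeff_X]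
  have : μ ≠ Finsupp.single i 1 := by
    intro h
    rw [h, degree_single] at hμ
    omega
  rw [if_neg this]

lemma xIdeal_pow_le (k : ℕ) : (xIdeal A n) ^ k ≤ Lideal A n k := by
  induction k with
  | zero =>
      intro f _ μ hμ
      omega
  | succ k ih =>
      rw [pow_succ]
      refine Ideal.mul_le.mpr fun f hf g hg => ?_
      exact Lideal_mul_le (ih hf) (xIdeal_le_Lideal_one hg)

lemma tsub_single_apply (μ : Fin n →₀ ℕ) (i j : Fin n) (h : j ≠ i) :
    ((μ - Finsupp.single i 1 : Fin n →₀ ℕ)) j = μ j := by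
  rw [Finsupp.tsub_apply, Finsupp.single_apply, if_neg (fun hh => h hh.symm), Nat.sub_zero]

lemma Lideal_le_pow (k : ℕ) : Lideal A n k ≤ (xIdeal A n) ^ k := by
  induction k with
  | zero => intro f _; rw [pow_zero, Ideal.one_eq_top]; trivial
  | succ k ih =>
      intro f hf
      classical
      set g : Fin n → MvPowerSeries (Fin n) A := fun i =>
        (fun ν => if (∀ j, j < i → ν j = 0) then
          MvPowerSeries.coeff (ν + Finsupp.single i 1) f else 0) with hgdef
      have hgapply : ∀ i ν, MvPowerSeries.coeff ν (g i) =
          if (∀ j, j < i → ν j = 0) then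
            MvPowerSeries.coeff (ν + Finsupp.single i 1) f else 0 := fun i ν => rfl
      have hg : ∀ i, g i ∈ Lideal A n k := by
        intro i ν hν
        rw [hgapply]
        split_ifs with h
        · exact hf _ (by rw [degree_add, degree_single]; omega)
        · rfl
      have hrepr : f = ∑ i : Fin n, MvPowerSeries.X i * g i := by
        apply MvPowerSeries.ext
        intro μ
        rw [map_sum]
        have hterm : ∀ i : Fin n, MvPowerSeries.coeff μ (MvPowerSeries.X i * g i) =
            if Finsupp.single i 1 ≤ μ then
              MvPowerSeries.coeff (μ - Finsupp.single i 1) (g i) else 0 := by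
          intro i
          rw [MvPowerSeries.X_def, MvPowerSeries.coeff_monomial_mul]
          split_ifs with h1
          · rw [one_mul]
          · rfl
        by_cases hμ0 : μ = 0
        · subst hμ0
          rw [hf 0 (by rw [degree_zero]; omega)]
          symm
          refine Finset.sum_eq_zero fun i _ => ?_
          exact MvPowerSeries.coeff_zero_X_mul _ i
        · have hsupp : μ.support.Nonempty := Finsupp.support_nonempty_iff.mpr hμ0
          set i₀ := μ.support.min' hsupp with hi₀
          have hi₀mem : i₀ ∈ μ.support := μ.support.min'_mem hsupp
          have hi₀ne : μ i₀ ≠ 0 := Finsupp.mem_support_iff.mp hi₀mem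
          have hzero : ∀ i ∈ Finset.univ, i ≠ i₀ →
              MvPowerSeries.coeff μ (MvPowerSeries.X i * g i) = 0 := by
            intro i _ hi
            rw [hterm i]
            split_ifs with h1
            · rw [hgapply]
              have hile : μ i ≠ 0 := by
                have := Finsupp.single_le_iff.mp h1
                omega
              have hlt : i₀ < i := lt_of_le_of_ne (μ.support.min'_le i
                (Finsupp.mem_support_iff.mpr hile)) (fun h => hi h.symm)
              rw [if_neg]
              intro hcond
              have h3 := hcond i₀ hlt
              rw [tsub_single_apply μ i i₀ (fun h => hi h.symm)] at h3
              · exact hi₀ne h3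
            · rfl
          rw [Finset.sum_eq_single_of_mem i₀ (Finset.mem_univ i₀) hzero, hterm i₀,
            if_pos (Finsupp.single_le_iff.mpr (by omega)), hgapply]
          rw [if_pos, tsub_add_cancel_of_le (Finsupp.single_le_iff.mpr (by omega))]
          intro j hj
          have hjns : j ∉ μ.support := fun hjmem => absurd (μ.support.min'_le j hjmem)
            (not_le.mpr hj)
          have hμj : μ j = 0 := Finsupp.notMem_support_iff.mp hjns
          rw [tsub_single_apply μ i₀ j (ne_of_lt hj), hμj]
      rw [hrepr]
      refine Ideal.sum_mem _ fun i _ => ?_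
      rw [pow_succ, mul_comm (MvPowerSeries.X i) (g i)]
      exact Ideal.mul_mem_mul (ih (hg i)) (Ideal.subset_span ⟨i, rfl⟩)

lemma xIdeal_pow_eq (k : ℕ) : (xIdeal A n) ^ k = Lideal A n k :=
  le_antisymm (xIdeal_pow_le k) (Lideal_le_pow k)

lemma mem_xpow_iff {k : ℕ} {f : MvPowerSeries (Fin n) A} :
    f ∈ (xIdeal A n) ^ k ↔ ∀ μ, degree μ < k → MvPowerSeries.coeff μ f = 0 := by
  rw [xIdeal_pow_eq]; exact Iff.rfl


lemma ord_bdd {f : MvPowerSeries (Fin n) A} (hf : f ≠ 0) :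
    BddAbove {i : ℕ | f ∈ (xIdeal A n) ^ i} := by
  have : ∃ μ, MvPowerSeries.coeff μ f ≠ 0 := by
    by_contra h
    push_neg at h
    exact hf (MvPowerSeries.ext fun μ => by rw [h μ, map_zero])
  obtain ⟨μ, hμ⟩ := this
  refine ⟨degree μ + 1, fun i hi => ?_⟩
  by_contra hlt
  exact hμ (mem_xpow_iff.mp hi μ (by omega))

lemma ord_mem_xpow {f : MvPowerSeries (Fin n) A} (hf : f ≠ 0) :
    f ∈ (xIdeal A n) ^ (ordF f) := by
  refine Nat.sSup_mem ⟨0, show f ∈ xIdeal A n ^ 0 by rw [pow_zero, Ideal.one_eq_top]; trivial⟩ (ord_bdd hf)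

lemma ord_spec {f : MvPowerSeries (Fin n) A} (hf : f ≠ 0) :
    ∀ μ, degree μ < ordF f → MvPowerSeries.coeff μ f = 0 :=
  mem_xpow_iff.mp (ord_mem_xpow hf)

lemma le_ord {f : MvPowerSeries (Fin n) A} (hf : f ≠ 0) {k : ℕ}
    (h : ∀ μ, degree μ < k → MvPowerSeries.coeff μ f = 0) : k ≤ ordF f :=
  le_csSup (ord_bdd hf) (mem_xpow_iff.mpr h)



lemma coeff_X_pow_mul'' {R : Type*} [CommRing R] (p : PowerSeries R) (k j : ℕ) :
    PowerSeries.coeff j (PowerSeries.X ^ k * p) =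
      if k ≤ j then PowerSeries.coeff (j - k) p else 0 := coeff_X_pow_mul' p k j

lemma degree_add' (μ ν : Fin n →₀ ℕ) : degree (μ + ν) = degree μ + degree ν :=
  degree_add μ ν

lemma ord_spec' {f : MvPowerSeries (Fin n) A} (hf : f ≠ 0) :
    ∀ μ, degree μ < ordF f → MvPowerSeries.coeff μ f = 0 := ord_spec hf

lemma le_ord' {f : MvPowerSeries (Fin n) A} (hf : f ≠ 0) {k : ℕ}
    (h : ∀ μ, degree μ < k → MvPowerSeries.coeff μ f = 0) : k ≤ ordF f := le_ord hf h

section Tdefs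

def coeffT (m : ℕ) (μ : Fin n →₀ ℕ)
    (G : PowerSeries (MvPowerSeries (Fin n) A)) : A :=
  MvPowerSeries.coeff μ (PowerSeries.coeff m G)

lemma coeffT_add (m : ℕ) (μ : Fin n →₀ ℕ) (G H : PowerSeries (MvPowerSeries (Fin n) A)) :
    coeffT m μ (G + H) = coeffT m μ G + coeffT m μ H := by
  rw [coeffT, coeffT, coeffT, map_add, map_add]

lemma Text {G H : PowerSeries (MvPowerSeries (Fin n) A)}
    (h : ∀ m μ, coeffT m μ G = coeffT m μ H) : G = H := by
  apply PowerSeries.ext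
  intro m
  exact MvPowerSeries.ext fun μ => h m μ

def IsHomog (c : ℤ) (G : PowerSeries (MvPowerSeries (Fin n) A)) : Prop :=
  ∀ (m : ℕ) (μ : Fin n →₀ ℕ), (degree μ : ℤ) ≠ c + m → coeffT m μ G = 0

def Ccomp (e : ℤ) (G : PowerSeries (MvPowerSeries (Fin n) A)) :
    PowerSeries (MvPowerSeries (Fin n) A) :=
  PowerSeries.mk fun m =>
    (fun μ => if (degree μ : ℤ) = e + m then coeffT m μ G else 0 : MvPowerSeries (Fin n) A)

def delta (e : ℤ) (G : PowerSeries (MvPowerSeries (Fin n) A)) : MvPowerSeries (Fin n) A :=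
  fun μ => if e ≤ (degree μ : ℤ) then coeffT ((degree μ : ℤ) - e).toNat μ G else 0

lemma coeffT_Ccomp (e : ℤ) (m : ℕ) (μ : Fin n →₀ ℕ) (G : PowerSeries (MvPowerSeries (Fin n) A)) :
    coeffT m μ (Ccomp e G) = if (degree μ : ℤ) = e + m then coeffT m μ G else 0 := by
  erw [coeffT, Ccomp, PowerSeries.coeff_mk]
  rfl

lemma coeff_delta (e : ℤ) (μ : Fin n →₀ ℕ) (G : PowerSeries (MvPowerSeries (Fin n) A)) :
    MvPowerSeries.coeff μ (delta e G) =
      if e ≤ (degree μ : ℤ) then coeffT ((degree μ : ℤ) - e).toNat μ G else 0 := rfl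

lemma Ccomp_isHomog (e : ℤ) (G : PowerSeries (MvPowerSeries (Fin n) A)) :
    IsHomog e (Ccomp e G) := fun m μ h => by rw [coeffT_Ccomp, if_neg h]

lemma Ccomp_add (e : ℤ) (G H : PowerSeries (MvPowerSeries (Fin n) A)) :
    Ccomp e (G + H) = Ccomp e G + Ccomp e H := by
  refine Text fun m μ => ?_
  rw [coeffT_add, coeffT_Ccomp, coeffT_Ccomp, coeffT_Ccomp, coeffT_add]
  split_ifs <;> simp

lemma delta_add (e : ℤ) (G H : PowerSeries (MvPowerSeries (Fin n) A)) :
    delta e (G + H) = delta e G + delta e H := by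
  apply MvPowerSeries.ext
  intro μ
  rw [map_add, coeff_delta, coeff_delta, coeff_delta, coeffT_add]
  split_ifs <;> simp

lemma coeff_homComp (i : ℕ) (f : MvPowerSeries (Fin n) A) (μ : Fin n →₀ ℕ) :
    MvPowerSeries.coeff μ (homComp i f) =
      if degree μ = i then MvPowerSeries.coeff μ f else 0 := rfl

lemma coeffT_homF (f : MvPowerSeries (Fin n) A) (m : ℕ) (μ : Fin n →₀ ℕ) :
    coeffT m μ (homF f) = if degree μ = ordF f + m then MvPowerSeries.coeff μ f else 0 := by
  rw [coeffT, homF, PowerSeries.coeff_mk, coeff_homComp]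

lemma homF_isHomog (f : MvPowerSeries (Fin n) A) : IsHomog (ordF f) (homF f) := by
  intro m μ h
  rw [coeffT_homF, if_neg ?_]
  intro hh
  apply h
  rw [hh]
  push_cast
  ring

lemma delta_homF {f : MvPowerSeries (Fin n) A} (hf : f ≠ 0) : delta (ordF f) (homF f) = f := by
  apply MvPowerSeries.ext
  intro μ
  rw [coeff_delta]
  split_ifs with h
  · rw [coeffT_homF, if_pos (by omega)]
  · exact (ord_spec' hf μ (by omega)).symm

lemma coeffT_zero (m : ℕ) (μ : Fin n →₀ ℕ) :
    coeffT m μ (0 : PowerSeries (MvPowerSeries (Fin n) A)) = 0 := by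
  rw [coeffT, map_zero, map_zero]

lemma coeffT_mul (m : ℕ) (μ : Fin n →₀ ℕ) (u v : PowerSeries (MvPowerSeries (Fin n) A)) :
    coeffT m μ (u * v) = ∑ p ∈ Finset.HasAntidiagonal.antidiagonal m, ∑ q ∈ Finset.HasAntidiagonal.antidiagonal μ,
      coeffT p.1 q.1 u * coeffT p.2 q.2 v := by
  rw [coeffT, PowerSeries.coeff_mul, map_sum]
  exact Finset.sum_congr rfl fun p _ => MvPowerSeries.coeff_mul _ _ _

lemma Ccomp_mul_homog {d : ℤ} {H : PowerSeries (MvPowerSeries (Fin n) A)}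
    (hH : IsHomog d H) (e : ℤ) (a : PowerSeries (MvPowerSeries (Fin n) A)) :
    Ccomp e (a * H) = Ccomp (e - d) a * H := by
  refine Text fun m μ => ?_
  rw [coeffT_Ccomp, coeffT_mul m μ a H, coeffT_mul m μ (Ccomp (e - d) a) H]
  simp only [coeffT_Ccomp]
  split_ifs with hc
  · refine Finset.sum_congr rfl fun p hp => Finset.sum_congr rfl fun q hq => ?_
    rw [Finset.HasAntidiagonal.mem_antidiagonal] at hp hq
    rcases eq_or_ne (coeffT p.2 q.2 H) 0 with h0 | h0
    · rw [h0, mul_zero, mul_zero]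
    · have hdeg2 : (degree q.2 : ℤ) = d + p.2 := by
        by_contra hne; exact h0 (hH p.2 q.2 hne)
      have hdegμ : degree q.1 + degree q.2 = degree μ := by rw [← degree_add', hq]
      rw [if_pos (by push_cast at hdegμ ⊢; omega)]
  · symm
    refine Finset.sum_eq_zero fun p hp => Finset.sum_eq_zero fun q hq => ?_
    rw [Finset.HasAntidiagonal.mem_antidiagonal] at hp hq
    rcases eq_or_ne (coeffT p.2 q.2 H) 0 with h0 | h0
    · rw [h0, mul_zero]
    · have hdeg2 : (degree q.2 : ℤ) = d + p.2 := by
        by_contra hne; exact h0 (hH p.2 q.2 hne)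
      have hdegμ : degree q.1 + degree q.2 = degree μ := by rw [← degree_add', hq]
      rw [if_neg ?_, zero_mul]
      intro hq1
      apply hc
      push_cast at hdegμ ⊢
      omega

lemma delta_mul {c d : ℤ} {u v : PowerSeries (MvPowerSeries (Fin n) A)}
    (hu : IsHomog c u) (hv : IsHomog d v) :
    delta (c + d) (u * v) = delta c u * delta d v := by
  apply MvPowerSeries.ext
  intro μ
  rw [MvPowerSeries.coeff_mul, coeff_delta]
  simp only [coeff_delta]
  split_ifs with hcd
  · rw [coeffT_mul, Finset.sum_comm]
    refine Finset.sum_congr rfl fun q hq => ?_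
    rw [Finset.HasAntidiagonal.mem_antidiagonal] at hq
    have hdq : degree q.1 + degree q.2 = degree μ := by rw [← degree_add', hq]
    by_cases h1 : c ≤ (degree q.1 : ℤ)
    · by_cases h2 : d ≤ (degree q.2 : ℤ)
      · rw [if_pos h1, if_pos h2]
        rw [Finset.sum_eq_single_of_mem
          (((degree q.1 : ℤ) - c).toNat, ((degree q.2 : ℤ) - d).toNat) ?_ ?_]
        · rw [Finset.HasAntidiagonal.mem_antidiagonal]
          omega
        · intro p hp hpne
          rw [Finset.HasAntidiagonal.mem_antidiagonal] at hp
          rcases eq_or_ne (coeffT p.1 q.1 u) 0 with h0 | h0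
          · rw [h0, zero_mul]
          rcases eq_or_ne (coeffT p.2 q.2 v) 0 with h0' | h0'
          · rw [h0', mul_zero]
          exfalso
          apply hpne
          have e1 : (degree q.1 : ℤ) = c + p.1 := by by_contra hne; exact h0 (hu _ _ hne)
          have e2 : (degree q.2 : ℤ) = d + p.2 := by by_contra hne; exact h0' (hv _ _ hne)
          have hp1 : p.1 = ((degree q.1 : ℤ) - c).toNat := by omega
          have hp2 : p.2 = ((degree q.2 : ℤ) - d).toNat := by omega
          exact Prod.ext hp1 hp2
      · rw [if_neg h2, mul_zero]
        refine Finset.sum_eq_zero fun p hp => ?_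
        rcases eq_or_ne (coeffT p.2 q.2 v) 0 with h0' | h0'
        · rw [h0', mul_zero]
        · exfalso
          have e2 : (degree q.2 : ℤ) = d + p.2 := by by_contra hne; exact h0' (hv _ _ hne)
          omega
    · rw [if_neg h1, zero_mul]
      refine Finset.sum_eq_zero fun p hp => ?_
      rcases eq_or_ne (coeffT p.1 q.1 u) 0 with h0 | h0
      · rw [h0, zero_mul]
      · exfalso
        have e1 : (degree q.1 : ℤ) = c + p.1 := by by_contra hne; exact h0 (hu _ _ hne)
        omega
  · symm
    refine Finset.sum_eq_zero fun q hq => ?_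
    rw [Finset.HasAntidiagonal.mem_antidiagonal] at hq
    have hdq : degree q.1 + degree q.2 = degree μ := by rw [← degree_add', hq]
    by_cases h1 : c ≤ (degree q.1 : ℤ)
    · rw [if_neg (show ¬ d ≤ (degree q.2 : ℤ) by omega), mul_zero]
    · rw [if_neg h1, zero_mul]

lemma Ccomp_eq_of_isHomog {d : ℤ} {H : PowerSeries (MvPowerSeries (Fin n) A)}
    (hH : IsHomog d H) : Ccomp d H = H := by
  refine Text fun m μ => ?_
  rw [coeffT_Ccomp]
  split_ifs with h
  · rfl
  · exact (hH m μ h).symm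

lemma Ccomp_eq_zero_of_isHomog {d e : ℤ} {H : PowerSeries (MvPowerSeries (Fin n) A)}
    (hH : IsHomog d H) (hne : e ≠ d) : Ccomp e H = 0 := by
  refine Text fun m μ => ?_
  rw [coeffT_Ccomp, coeffT_zero]
  split_ifs with h
  · exact hH m μ (by omega)
  · rfl

lemma Ccomp_zero' (e : ℤ) : Ccomp e (0 : PowerSeries (MvPowerSeries (Fin n) A)) = 0 := by
  refine Text fun m μ => ?_
  rw [coeffT_Ccomp, coeffT_zero]
  split_ifs <;> rfl

def CcompHom (e : ℤ) :
    PowerSeries (MvPowerSeries (Fin n) A) →+ PowerSeries (MvPowerSeries (Fin n) A) where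
  toFun := Ccomp e
  map_zero' := Ccomp_zero' e
  map_add' := Ccomp_add e

lemma delta_zero' (e : ℤ) : delta e (0 : PowerSeries (MvPowerSeries (Fin n) A)) = 0 := by
  apply MvPowerSeries.ext
  intro μ
  rw [coeff_delta, map_zero, coeffT_zero]
  split_ifs <;> rfl

def deltaHom (e : ℤ) :
    PowerSeries (MvPowerSeries (Fin n) A) →+ MvPowerSeries (Fin n) A where
  toFun := delta e
  map_zero' := delta_zero' e
  map_add' := delta_add e

lemma delta_mul' {e d : ℤ} {u v : PowerSeries (MvPowerSeries (Fin n) A)}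
    (hu : IsHomog (e - d) u) (hv : IsHomog d v) :
    delta e (u * v) = delta (e - d) u * delta d v := by
  have h := delta_mul hu hv
  rwa [sub_add_cancel] at h

/-- Claim A: components of elements of `hom I` dehomogenize into `I`. -/
lemma delta_Ccomp_mem {I : Ideal (MvPowerSeries (Fin n) A)}
    {G : PowerSeries (MvPowerSeries (Fin n) A)} (hG : G ∈ homIdeal I) (e : ℤ) :
    delta e (Ccomp e G) ∈ I := by
  obtain ⟨c, hsupp, hsum⟩ := Submodule.mem_span_set.mp hG
  rw [← hsum, Finsupp.sum]
  have h1 : Ccomp e (∑ h ∈ c.support, c h • h) = ∑ h ∈ c.support, Ccomp e (c h • h) :=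
    map_sum (CcompHom e) _ _
  rw [h1]
  have h2 : delta e (∑ h ∈ c.support, Ccomp e (c h • h)) =
      ∑ h ∈ c.support, delta e (Ccomp e (c h • h)) :=
    map_sum (deltaHom e) _ _
  rw [h2]
  refine Ideal.sum_mem _ fun h hh => ?_
  obtain ⟨f, hfI, hfne, hfh⟩ := hsupp hh
  rw [← hfh, smul_eq_mul, Ccomp_mul_homog (homF_isHomog f) e (c (homF f)),
    delta_mul' (Ccomp_isHomog _ _) (homF_isHomog f), delta_homF hfne]
  exact Ideal.mul_mem_left _ _ hfI

/-- Claim B: a homogeneous element whose dehomogenization lies in `I` is in `hom I`. -/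
lemma mem_homIdeal_of_isHomog {I : Ideal (MvPowerSeries (Fin n) A)}
    {G : PowerSeries (MvPowerSeries (Fin n) A)} (e : ℤ) (hG : IsHomog e G)
    (hδ : delta e G ∈ I) : G ∈ homIdeal I := by
  by_cases h0 : delta e G = 0
  · have hG0 : G = 0 := by
      refine Text fun m μ => ?_
      rw [coeffT_zero]
      by_cases hc : (degree μ : ℤ) = e + m
      · have he : e ≤ (degree μ : ℤ) := by omega
        have hcoe := congrArg (MvPowerSeries.coeff μ) h0
        rw [coeff_delta, if_pos he, map_zero,
          show (((degree μ : ℤ) - e).toNat) = m from by omega] at hcoe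
        exact hcoe
      · exact hG m μ hc
    rw [hG0]; exact zero_mem _
  · have hfI : delta e G ∈ I := hδ
    set f := delta e G with hf
    have hele : e ≤ (ordF f : ℤ) := by
      rcases le_or_gt e 0 with he | he
      · omega
      · have : e.toNat ≤ ordF f := by
          refine le_ord' h0 fun μ hμ => ?_
          rw [hf, coeff_delta, if_neg (by omega)]
        omega
    set k := ((ordF f : ℤ) - e).toNat with hk
    have hkcast : (k : ℤ) = (ordF f : ℤ) - e := by omega
    have hrepr : G = PowerSeries.X ^ k * homF f := by
      refine Text fun m μ => ?_
      have hRHS : coeffT m μ (PowerSeries.X ^ k * homF f) =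
          if k ≤ m then
            (if degree μ = ordF f + (m - k) then MvPowerSeries.coeff μ f else 0)
          else 0 := by
        rw [coeffT, coeff_X_pow_mul', apply_ite (MvPowerSeries.coeff μ), map_zero,
          show MvPowerSeries.coeff μ
              (PowerSeries.coeff (m - k) (homF f)) =
            coeffT (m - k) μ (homF f) from rfl, coeffT_homF]
      rw [hRHS]
      by_cases hc : (degree μ : ℤ) = e + m
      · have he2 : e ≤ (degree μ : ℤ) := by omega
        have hGf : coeffT m μ G = MvPowerSeries.coeff μ f := by
          rw [hf, coeff_delta, if_pos he2,
            show (((degree μ : ℤ) - e).toNat) = m from by omega]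
        by_cases hkm : k ≤ m
        · rw [if_pos hkm, if_pos (by omega), hGf]
        · rw [if_neg hkm, hGf]
          exact ord_spec' h0 μ (by omega)
      · rw [hG m μ hc]
        symm
        split_ifs with hkm hdeg
        · omega
        · rfl
        · rfl
    rw [hrepr]
    exact Ideal.mul_mem_left _ _ (Ideal.subset_span ⟨f, hfI, h0, rfl⟩)

end Tdefs

section Main

lemma mem_xpow_of_low_zero {k : ℕ} {f : MvPowerSeries (Fin n) A}
    (h : ∀ μ, degree μ < k → MvPowerSeries.coeff μ f = 0) : f ∈ (xIdeal A n) ^ k :=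
  mem_xpow_iff.mpr h

def coeffTHom (m : ℕ) (μ : Fin n →₀ ℕ) :
    PowerSeries (MvPowerSeries (Fin n) A) →+ A where
  toFun := coeffT m μ
  map_zero' := coeffT_zero m μ
  map_add' := coeffT_add m μ

/-- high-degree part -/
def Pp (E : ℕ) (G : PowerSeries (MvPowerSeries (Fin n) A)) :
    PowerSeries (MvPowerSeries (Fin n) A) :=
  PowerSeries.mk fun m =>
    (fun μ => if (m : ℤ) + E < degree μ then coeffT m μ G else 0 : MvPowerSeries (Fin n) A)

/-- low-degree part -/
def Nn (E : ℕ) (G : PowerSeries (MvPowerSeries (Fin n) A)) :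
    PowerSeries (MvPowerSeries (Fin n) A) :=
  PowerSeries.mk fun m =>
    (fun μ => if (degree μ : ℤ) < (m : ℤ) - E then coeffT m μ G else 0 : MvPowerSeries (Fin n) A)

lemma coeffT_Pp (E : ℕ) (G : PowerSeries (MvPowerSeries (Fin n) A)) (m : ℕ) (μ : Fin n →₀ ℕ) :
    coeffT m μ (Pp E G) = if (m : ℤ) + E < degree μ then coeffT m μ G else 0 := by
  erw [coeffT, Pp, PowerSeries.coeff_mk]; rfl

lemma coeffT_Nn (E : ℕ) (G : PowerSeries (MvPowerSeries (Fin n) A)) (m : ℕ) (μ : Fin n →₀ ℕ) :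
    coeffT m μ (Nn E G) = if (degree μ : ℤ) < (m : ℤ) - E then coeffT m μ G else 0 := by
  erw [coeffT, Nn, PowerSeries.coeff_mk]; rfl

lemma decompose (E : ℕ) (G : PowerSeries (MvPowerSeries (Fin n) A)) :
    G = (∑ e ∈ Finset.Icc (-(E : ℤ)) (E : ℤ), Ccomp e G) + Pp E G + Nn E G := by
  classical
  refine Text fun m μ => ?_
  have hsum : coeffT m μ (∑ e ∈ Finset.Icc (-(E : ℤ)) (E : ℤ), Ccomp e G)
      = if ((degree μ : ℤ) - m) ∈ Finset.Icc (-(E : ℤ)) (E : ℤ) then coeffT m μ G else 0 := by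
    have hadd := map_sum (coeffTHom m μ) (fun e => Ccomp e G) (Finset.Icc (-(E : ℤ)) (E : ℤ))
    simp only [coeffTHom, AddMonoidHom.coe_mk, ZeroHom.coe_mk] at hadd
    have hcc : ∀ e ∈ Finset.Icc (-(E : ℤ)) (E : ℤ), coeffT m μ (Ccomp e G)
        = if e = (degree μ : ℤ) - m then coeffT m μ G else 0 := by
      intro e _
      rw [coeffT_Ccomp]
      exact if_congr (by omega) rfl rfl
    rw [hadd, Finset.sum_congr rfl hcc,
      Finset.sum_ite_eq' (Finset.Icc (-(E : ℤ)) (E : ℤ)) ((degree μ : ℤ) - m)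
      (fun _ => coeffT m μ G)]
  rw [coeffT_add, coeffT_add, hsum, coeffT_Pp, coeffT_Nn]
  by_cases h1 : -(E : ℤ) ≤ (degree μ : ℤ) - m ∧ (degree μ : ℤ) - m ≤ (E : ℤ)
  · rw [if_pos (Finset.mem_Icc.mpr h1), if_neg (by omega), if_neg (by omega),
      add_zero, add_zero]
  · rw [if_neg (fun hmem => h1 (Finset.mem_Icc.mp hmem)), zero_add]
    by_cases h2 : (m : ℤ) + E < degree μ
    · rw [if_pos h2, if_neg (by omega), add_zero]
    · rw [if_neg h2, zero_add, if_pos (by omega)]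

lemma mem_map_C_of_coeff {Q : Ideal (MvPowerSeries (Fin n) A)} (hfg : Q.FG)
    {P : PowerSeries (MvPowerSeries (Fin n) A)}
    (h : ∀ m, PowerSeries.coeff m P ∈ Q) :
    P ∈ Ideal.map (PowerSeries.C) Q := by
  classical
  obtain ⟨s, hs⟩ := hfg
  have hmem : ∀ m, PowerSeries.coeff m P ∈
      Submodule.span (MvPowerSeries (Fin n) A) (s : Set (MvPowerSeries (Fin n) A)) := by
    intro m
    rw [show Submodule.span (MvPowerSeries (Fin n) A) (s : Set (MvPowerSeries (Fin n) A))
      = Ideal.span (s : Set (MvPowerSeries (Fin n) A)) from rfl, hs]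
    exact h m
  choose ρ _ hρ using fun m => Submodule.mem_span_finset.mp (hmem m)
  have hrepr : P = ∑ a ∈ s, (PowerSeries.mk fun m => ρ m a) * PowerSeries.C a := by
    apply PowerSeries.ext
    intro m
    rw [map_sum]
    rw [Finset.sum_congr rfl (fun a _ => PowerSeries.coeff_mul_C m _ a)]
    rw [Finset.sum_congr rfl (fun a _ => by rw [PowerSeries.coeff_mk])]
    rw [← hρ m]
    exact Finset.sum_congr rfl fun a _ => by rw [smul_eq_mul]
  rw [hrepr]
  refine Ideal.sum_mem _ fun a ha => Ideal.mul_mem_left _ _ (Ideal.mem_map_of_mem _ ?_)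
  rw [← hs]
  exact Ideal.subset_span ha

end Main

set_option maxHeartbeats 1000000 in
set_option synthInstance.maxHeartbeats 400000 in
theorem stmt9' {A : Type*} [CommRing A] [IsLocalRing A] {n : ℕ}
    (hnoeth : IsNoetherianRing A)
    (I J : Ideal (MvPowerSeries (Fin n) A)) :
    homIdeal (I ⊓ J) = homIdeal I ⊓ homIdeal J := by
  classical
  refine le_antisymm (le_inf ?_ ?_) ?_
  · refine Ideal.span_mono ?_
    rintro F ⟨f, hf, hne, hF⟩
    exact ⟨f, hf.1, hne, hF⟩
  · refine Ideal.span_mono ?_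
    rintro F ⟨f, hf, hne, hF⟩
    exact ⟨f, hf.2, hne, hF⟩
  · intro G hG
    obtain ⟨hGI, hGJ⟩ := Submodule.mem_inf.mp hG
    haveI := hnoeth
    haveI hS : IsNoetherianRing (MvPowerSeries (Fin n) A) := isNoetherianRing_mv A n
    haveI hT : IsNoetherianRing (PowerSeries (MvPowerSeries (Fin n) A)) :=
      isNoetherianRing_powerSeries
    set Q : Ideal (PowerSeries (MvPowerSeries (Fin n) A)) := homIdeal (I ⊓ J) with hQ
    by_cases hQtop : Q = ⊤
    · rw [hQtop]; trivial
    have hcomp : ∀ e : ℤ, Ccomp e G ∈ Q := by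
      intro e
      refine mem_homIdeal_of_isHomog e (Ccomp_isHomog e G) ?_
      exact ⟨delta_Ccomp_mem hGI e, delta_Ccomp_mem hGJ e⟩
    set K : Ideal (PowerSeries (MvPowerSeries (Fin n) A)) :=
      Ideal.map (PowerSeries.C) (xIdeal A n)
        ⊔ Ideal.span {PowerSeries.X} with hK
    have htail : ∀ E : ℕ,
        G - (∑ e ∈ Finset.Icc (-(E : ℤ)) (E : ℤ), Ccomp e G) ∈ K ^ (E + 1) := by
      intro E
      have hdec : G - (∑ e ∈ Finset.Icc (-(E : ℤ)) (E : ℤ), Ccomp e G) = Pp E G + Nn E G := by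
        linear_combination decompose E G
      rw [hdec]
      refine Ideal.add_mem _ ?_ ?_
      · have h1 : Pp E G ∈ Ideal.map (PowerSeries.C)
            ((xIdeal A n) ^ (E + 1)) := by
          refine mem_map_C_of_coeff (IsNoetherian.noetherian _) fun m => ?_
          refine mem_xpow_of_low_zero fun μ hμ => ?_
          rw [show MvPowerSeries.coeff μ
              (PowerSeries.coeff m (Pp E G)) =
            coeffT m μ (Pp E G) from rfl, coeffT_Pp, if_neg (by omega)]
        rw [Ideal.map_pow] at h1
        exact (Ideal.pow_right_mono le_sup_left (E + 1)) h1
      · have h2 : Nn E G ∈ (Ideal.span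
            {(PowerSeries.X : PowerSeries (MvPowerSeries (Fin n) A))}) ^ (E + 1) := by
          rw [Ideal.span_singleton_pow, Ideal.mem_span_singleton,
            PowerSeries.X_pow_dvd_iff]
          intro m hm
          apply MvPowerSeries.ext
          intro μ
          rw [map_zero, show MvPowerSeries.coeff μ
              (PowerSeries.coeff m (Nn E G)) =
            coeffT m μ (Nn E G) from rfl, coeffT_Nn, if_neg (by omega)]
        exact (Ideal.pow_right_mono le_sup_right (E + 1)) h2
    have htr : ∀ E : ℕ, (∑ e ∈ Finset.Icc (-(E : ℤ)) (E : ℤ), Ccomp e G) ∈ Q :=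
      fun E => Ideal.sum_mem _ fun e _ => hcomp e
    have hKne : K ≠ ⊤ := by
      intro htop
      set ε : PowerSeries (MvPowerSeries (Fin n) A) →+* A :=
        (MvPowerSeries.constantCoeff).comp
          (PowerSeries.constantCoeff) with hε
      have hker : K ≤ RingHom.ker ε := by
        rw [hK]
        refine sup_le ?_ ?_
        · rw [xIdeal, Ideal.map_span, Ideal.span_le]
          rintro y ⟨x, ⟨i, rfl⟩, rfl⟩
          rw [SetLike.mem_coe, RingHom.mem_ker, hε, RingHom.comp_apply,
            PowerSeries.constantCoeff_C, MvPowerSeries.constantCoeff_X]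
        · rw [Ideal.span_le]
          intro y hy
          rw [Set.mem_singleton_iff] at hy
          subst hy
          rw [SetLike.mem_coe, RingHom.mem_ker, hε, RingHom.comp_apply,
            PowerSeries.constantCoeff_X, map_zero]
      rw [htop] at hker
      have h1 : ε 1 = 0 := RingHom.mem_ker.mp (hker Submodule.mem_top)
      rw [map_one] at h1
      exact one_ne_zero h1
    haveI : Nontrivial ((PowerSeries (MvPowerSeries (Fin n) A)) ⧸ Q) :=
      Ideal.Quotient.nontrivial_iff.mpr hQtop
    haveI : IsLocalRing ((PowerSeries (MvPowerSeries (Fin n) A)) ⧸ Q) :=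
      IsLocalRing.of_surjective' _ Ideal.Quotient.mk_surjective
    set mkQ := Ideal.Quotient.mk Q with hmkQ
    have hKbar : Ideal.map mkQ K ≠ ⊤ := by
      intro htop
      have hcm := Ideal.comap_map_of_surjective mkQ Ideal.Quotient.mk_surjective K
      rw [htop] at hcm
      have hbot : Ideal.comap mkQ (⊥ : Ideal _) = Q := by
        rw [← RingHom.ker_eq_comap_bot, hmkQ, Ideal.mk_ker]
      rw [hbot] at hcm
      have h1 : K ⊔ Q = ⊤ := by rw [← hcm, Ideal.comap_top]
      have h2 : K ⊔ Q ≤ IsLocalRing.maximalIdeal _ :=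
        sup_le (IsLocalRing.le_maximalIdeal hKne) (IsLocalRing.le_maximalIdeal hQtop)
      rw [h1] at h2
      exact (IsLocalRing.maximalIdeal.isMaximal _).ne_top (top_le_iff.mp h2)
    have hkrull := Ideal.iInf_pow_eq_bot_of_isLocalRing (Ideal.map mkQ K) hKbar
    have hGbar : mkQ G ∈ (⨅ i : ℕ, (Ideal.map mkQ K) ^ i) := by
      rw [Submodule.mem_iInf]
      intro i
      have h3 : mkQ G = mkQ (G - (∑ e ∈ Finset.Icc (-(i : ℤ)) (i : ℤ), Ccomp e G)) := by
        rw [map_sub, Ideal.Quotient.eq_zero_iff_mem.mpr (htr i), sub_zero]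
      rw [h3, ← Ideal.map_pow]
      exact Ideal.mem_map_of_mem _ (Ideal.pow_le_pow_right (by omega) (htail i))
    rw [hkrull] at hGbar
    exact Ideal.Quotient.eq_zero_iff_mem.mp ((Submodule.mem_bot _).mp hGbar)


end Stmt9Aux

/-- `hom(I ∩ J) = hom(I) ∩ hom(J)` for ideals `I, J ⊆ S = A[[x₁,…,xₙ]]`. -/
theorem stmt9 [IsLocalRing A] (hreg : IsCompleteRegularLocal A)
    (hA : ContainsFieldOrUnramified A) (I J : Ideal (MvPowerSeries (Fin n) A)) :
    homIdeal (I ⊓ J) = homIdeal I ⊓ homIdeal J :=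
  Stmt9Aux.stmt9' hreg.1 I J

end
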